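/- A tree-child network with n leaves has n - 1 reticulation nodes (the maximum possible) if and only if for every node v of the network there is a unique directed path from v to a leaf all of whose intermediate nodes are tree nodes. -/

import Mathlib

/-- In-degree of a vertex in a digraph given by an adjacency relation. -/
noncomputable def indeg {V : Type} (adj : V → V → Prop) (v : V) : ℕ := Nat.card {u // adj u v}

/-- Out-degree of a vertex in a digraph given by an adjacency relation. -/
noncomputable def outdeg {V : Type} (adj : V → V → Prop) (v : V) : ℕ := Nat.card {u // adj v u}

/-- A (rooted, binary) phylogenetic network: a connected rooted DAG whose root has
indegree 0 and outdegree 1, and whose non-root vertices are leaves (indegree 1,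
outdegree 0), tree nodes (indegree 1, outdegree 2), or reticulation nodes
(indegree 2, outdegree 1). (Adjacency is a relation, so there are no parallel edges.) -/
structure IsPhyloNetwork {V : Type} [Finite V] (adj : V → V → Prop) (root : V) : Prop where
  acyclic : ∀ v, ¬ Relation.TransGen adj v v
  connected : ∀ v, Relation.ReflTransGen adj root v
  root_indeg : indeg adj root = 0
  root_outdeg : outdeg adj root = 1
  node_types : ∀ v, v ≠ root →
    (indeg adj v = 1 ∧ outdeg adj v = 0) ∨
    (indeg adj v = 1 ∧ outdeg adj v = 2) ∨
    (indeg adj v = 2 ∧ outdeg adj v = 1)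

/-- A leaf: indegree 1 and outdegree 0. -/
def IsLeaf {V : Type} (adj : V → V → Prop) (v : V) : Prop :=
  indeg adj v = 1 ∧ outdeg adj v = 0

/-- A tree node: indegree 1 and outdegree 2. -/
def IsTreeNode {V : Type} (adj : V → V → Prop) (v : V) : Prop :=
  indeg adj v = 1 ∧ outdeg adj v = 2

/-- A reticulation node: indegree 2 and outdegree 1. -/
def IsReticulation {V : Type} (adj : V → V → Prop) (v : V) : Prop :=
  indeg adj v = 2 ∧ outdeg adj v = 1

/-- A tree-child network: a phylogenetic network in which every node which is not a
leaf has at least one child which is not a reticulation node. -/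
def IsTreeChildNetwork {V : Type} [Finite V] (adj : V → V → Prop) (root : V) : Prop :=
  IsPhyloNetwork adj root ∧
    ∀ v, ¬ IsLeaf adj v → ∃ u, adj v u ∧ ¬ IsReticulation adj u

/-- `l` is a directed path starting at `v` and ending at a leaf, all of whose
intermediate nodes are tree nodes. -/
def IsTreePathToLeaf {V : Type} (adj : V → V → Prop) (v : V) (l : List V) : Prop :=
  l.head? = some v ∧ (∃ w, l.getLast? = some w ∧ IsLeaf adj w) ∧
    List.Chain' adj l ∧ ∀ u ∈ (l.drop 1).dropLast, IsTreeNode adj u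

section Aux
set_option linter.unusedSectionVars false
variable {V : Type} [Finite V] {adj : V → V → Prop} {root : V}

lemma indeg_ne_zero {u v : V} (h : adj u v) : indeg adj v ≠ 0 := by
  have : Nonempty {w // adj w v} := ⟨⟨u, h⟩⟩
  have := Nat.card_pos (α := {w // adj w v})
  unfold indeg; omega

lemma outdeg_ne_zero {u v : V} (h : adj v u) : outdeg adj v ≠ 0 := by
  have : Nonempty {w // adj v w} := ⟨⟨u, h⟩⟩
  have := Nat.card_pos (α := {w // adj v w})
  unfold outdeg; omega

lemma parent_eq {v : V} (h : indeg adj v = 1) {u w : V} (h1 : adj u v) (h2 : adj w v) : u = w := by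
  have hs := (Nat.card_eq_one_iff_unique.mp h).1
  have : (⟨u, h1⟩ : {w // adj w v}) = ⟨w, h2⟩ := Subsingleton.elim _ _
  exact congrArg Subtype.val this

lemma exists_parent {v : V} (h : indeg adj v = 1) : ∃ u, adj u v := by
  obtain ⟨⟨u, hu⟩⟩ := (Nat.card_eq_one_iff_unique.mp h).2
  exact ⟨u, hu⟩

lemma not_retic_of_tree_or_leaf {u : V} (h : IsTreeNode adj u ∨ IsLeaf adj u) :
    ¬ IsReticulation adj u := by
  rintro ⟨h1, h2⟩
  rcases h with ⟨h3, h4⟩ | ⟨h3, h4⟩ <;> omega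

lemma child_ne_root (hnet : IsPhyloNetwork adj root) {u v : V} (h : adj u v) : v ≠ root := by
  rintro rfl; exact indeg_ne_zero h hnet.root_indeg

lemma child_cases (hnet : IsPhyloNetwork adj root) {u v : V} (h : adj u v)
    (hr : ¬ IsReticulation adj v) : IsTreeNode adj v ∨ IsLeaf adj v := by
  rcases hnet.node_types v (child_ne_root hnet h) with h1 | h1 | h1
  · exact Or.inr h1
  · exact Or.inl h1
  · exact absurd h1 hr

lemma wf_desc (hnet : IsPhyloNetwork adj root) :
    WellFounded (fun a b : V => Relation.TransGen adj b a) := by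
  have h1 : IsTrans V (fun a b : V => Relation.TransGen adj b a) :=
    ⟨fun a b c h1 h2 => h2.trans h1⟩
  have h2 : IsIrrefl V (fun a b : V => Relation.TransGen adj b a) :=
    ⟨fun a h => hnet.acyclic a h⟩
  exact Finite.wellFounded_of_trans_of_irrefl _

lemma singleton_path {v : V} (hv : IsLeaf adj v) : IsTreePathToLeaf adj v [v] := by
  refine ⟨rfl, ⟨v, rfl, hv⟩, List.isChain_singleton v, ?_⟩
  simp

lemma leaf_path_eq {v : V} (hv : IsLeaf adj v) {l : List V}
    (hl : IsTreePathToLeaf adj v l) : l = [v] := by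
  obtain ⟨hhead, _, hchain, _⟩ := hl
  match l with
  | [] => simp at hhead
  | [a] => simp at hhead; rw [hhead]
  | a :: b :: t =>
    simp at hhead
    subst hhead
    simp only [List.Chain', List.isChain_cons_cons] at hchain
    exact absurd (outdeg_ne_zero hchain.1) (by simp [hv.2])

lemma cons_path {v u : V} {l : List V} (hadj : adj v u)
    (hu : IsTreeNode adj u ∨ IsLeaf adj u) (hl : IsTreePathToLeaf adj u l) :
    IsTreePathToLeaf adj v (v :: l) := by
  obtain ⟨hhead, ⟨w, hlast, hwleaf⟩, hchain, hmid⟩ := hl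
  match l with
  | [] => simp at hhead
  | a :: rest =>
    simp at hhead
    subst hhead
    refine ⟨rfl, ⟨w, by rwa [List.getLast?_cons_cons], hwleaf⟩,
      List.isChain_cons_cons.mpr ⟨hadj, hchain⟩, ?_⟩
    intro x hx
    match rest with
    | [] => simp at hx
    | b :: rs =>
      simp only [List.drop_one, List.tail_cons, List.dropLast_cons₂,
        List.mem_cons] at hx hmid ⊢
      rcases hx with rfl | hx
      · rcases hu with hu | hu
        · exact hu
        · simp only [List.Chain', List.isChain_cons_cons] at hchain
          exact absurd (outdeg_ne_zero hchain.1) (by simp [hu.2])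
      · exact hmid x hx

lemma path_decomp {v : V} (hv : ¬ IsLeaf adj v) {l : List V}
    (hl : IsTreePathToLeaf adj v l) :
    ∃ u l', l = v :: l' ∧ adj v u ∧ (IsTreeNode adj u ∨ IsLeaf adj u) ∧
      IsTreePathToLeaf adj u l' := by
  obtain ⟨hhead, ⟨w, hlast, hwleaf⟩, hchain, hmid⟩ := hl
  match l with
  | [] => simp at hhead
  | [a] =>
    simp at hhead hlast
    subst hhead; subst hlast
    exact absurd hwleaf hv
  | a :: u :: rest =>
    simp at hhead
    subst hhead
    simp only [List.Chain', List.isChain_cons_cons] at hchain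
    refine ⟨u, u :: rest, rfl, hchain.1, ?_, rfl,
      ⟨w, by rwa [List.getLast?_cons_cons] at hlast, hwleaf⟩, hchain.2, ?_⟩
    · match rest with
      | [] =>
        right
        rw [List.getLast?_cons_cons] at hlast
        simp at hlast
        subst hlast; exact hwleaf
      | b :: rs =>
        left
        apply hmid
        simp
    · intro x hx
      apply hmid
      match rest with
      | [] => simp at hx
      | b :: rs =>
        simp only [List.drop_one, List.tail_cons, List.dropLast_cons₂,
          List.mem_cons] at hx ⊢
        exact Or.inr hx

lemma exists_path (h : IsTreeChildNetwork adj root) (v : V) :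
    ∃ l, IsTreePathToLeaf adj v l := by
  refine (wf_desc h.1).induction (C := fun v => ∃ l, IsTreePathToLeaf adj v l) v ?_
  intro v ih
  by_cases hv : IsLeaf adj v
  · exact ⟨[v], singleton_path hv⟩
  · obtain ⟨u, hadj, hur⟩ := h.2 v hv
    obtain ⟨l, hl⟩ := ih u (Relation.TransGen.single hadj)
    exact ⟨v :: l, cons_path hadj (child_cases h.1 hadj hur) hl⟩

lemma uniqueChild_iff_uniquePath (h : IsTreeChildNetwork adj root) :
    (∀ v, ¬ IsLeaf adj v → ∀ u₁ u₂, adj v u₁ → ¬ IsReticulation adj u₁ →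
      adj v u₂ → ¬ IsReticulation adj u₂ → u₁ = u₂) ↔
    (∀ v, ∃! l, IsTreePathToLeaf adj v l) := by
  constructor
  · intro huc v
    refine (wf_desc h.1).induction (C := fun v => ∃! l, IsTreePathToLeaf adj v l) v ?_
    intro v ih
    by_cases hv : IsLeaf adj v
    · exact ⟨[v], singleton_path hv, fun l hl => leaf_path_eq hv hl⟩
    · obtain ⟨u, hadj, hur⟩ := h.2 v hv
      obtain ⟨lu, hlu, hlu_uniq⟩ := ih u (Relation.TransGen.single hadj)
      refine ⟨v :: lu, cons_path hadj (child_cases h.1 hadj hur) hlu, ?_⟩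
      intro l hl
      obtain ⟨u', l', rfl, hadj', hu', hl'⟩ := path_decomp hv hl
      have : u' = u := huc v hv u' u hadj' (not_retic_of_tree_or_leaf hu') hadj hur
      subst this
      rw [hlu_uniq l' hl']
  · intro hup v hv u₁ u₂ h1 hr1 h2 hr2
    obtain ⟨l₁, hl₁⟩ := exists_path h u₁
    obtain ⟨l₂, hl₂⟩ := exists_path h u₂
    have p₁ := cons_path h1 (child_cases h.1 h1 hr1) hl₁
    have p₂ := cons_path h2 (child_cases h.1 h2 hr2) hl₂
    obtain ⟨l, -, huniq⟩ := hup v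
    have : v :: l₁ = v :: l₂ := (huniq _ p₁).trans (huniq _ p₂).symm
    have hll : l₁ = l₂ := by injection this
    have e1 := hl₁.1
    have e2 := hl₂.1
    rw [hll, e2] at e1
    injection e1 with e1
    exact e1.symm

lemma card_or_disjoint (p q : V → Prop) (hd : ∀ v, p v → q v → False) :
    Nat.card {v // p v ∨ q v} = Nat.card {v // p v} + Nat.card {v // q v} := by
  classical
  have := Fintype.ofFinite V
  simp only [Nat.card_eq_fintype_card]
  apply Fintype.card_subtype_or_disjoint
  rw [Pi.disjoint_iff]
  intro v
  rw [disjoint_iff_inf_le]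
  rintro ⟨hp, hq⟩
  exact hd v hp hq

lemma card_root : Nat.card {v : V // v = root} = 1 :=
  Nat.card_eq_one_iff_unique.mpr
    ⟨⟨fun a b => Subtype.ext (a.2.trans b.2.symm)⟩, ⟨⟨root, rfl⟩⟩⟩

lemma card_nonleaf (hnet : IsPhyloNetwork adj root) :
    Nat.card {v : V // ¬ IsLeaf adj v} =
      1 + Nat.card {v : V // IsTreeNode adj v} + Nat.card {v : V // IsReticulation adj v} := by
  have e : ∀ v : V, ¬ IsLeaf adj v ↔ (v = root ∨ (IsTreeNode adj v ∨ IsReticulation adj v)) := by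
    intro v
    constructor
    · intro hv
      by_cases hr : v = root
      · exact Or.inl hr
      · rcases hnet.node_types v hr with h1 | h1 | h1
        · exact absurd h1 hv
        · exact Or.inr (Or.inl h1)
        · exact Or.inr (Or.inr h1)
    · rintro (rfl | ⟨h1, h2⟩ | ⟨h1, h2⟩) ⟨h3, h4⟩
      · rw [hnet.root_indeg] at h3; omega
      · omega
      · omega
  rw [Nat.card_congr (Equiv.subtypeEquivRight e)]
  rw [card_or_disjoint _ _ (by rintro v rfl (⟨h1, h2⟩ | ⟨h1, h2⟩) <;>
    rw [hnet.root_indeg] at h1 <;> omega)]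
  rw [card_or_disjoint _ _ (by rintro v ⟨h1, h2⟩ ⟨h3, h4⟩; omega)]
  rw [card_root, add_assoc]

lemma card_treeleaf :
    Nat.card {v : V // IsTreeNode adj v ∨ IsLeaf adj v} =
      Nat.card {v : V // IsTreeNode adj v} + Nat.card {v : V // IsLeaf adj v} :=
  card_or_disjoint _ _ (by rintro v ⟨h1, h2⟩ ⟨h3, h4⟩; omega)

lemma card_iff_uniqueChild (h : IsTreeChildNetwork adj root) (n : ℕ)
    (hn : Nat.card {v : V // IsLeaf adj v} = n) :
    Nat.card {v : V // IsReticulation adj v} = n - 1 ↔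
    (∀ v, ¬ IsLeaf adj v → ∀ u₁ u₂, adj v u₁ → ¬ IsReticulation adj u₁ →
      adj v u₂ → ¬ IsReticulation adj u₂ → u₁ = u₂) := by
  classical
  -- a leaf exists
  have hn1 : 1 ≤ n := by
    obtain ⟨l, hl⟩ := exists_path h root
    obtain ⟨-, ⟨w, -, hw⟩, -, -⟩ := hl
    have : Nonempty {v : V // IsLeaf adj v} := ⟨⟨w, hw⟩⟩
    have := Nat.card_pos (α := {v : V // IsLeaf adj v})
    omega
  -- the parent map
  have hindeg : ∀ v : V, IsTreeNode adj v ∨ IsLeaf adj v → indeg adj v = 1 := by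
    rintro v (⟨h1, -⟩ | ⟨h1, -⟩) <;> exact h1
  set S := {v : V // IsTreeNode adj v ∨ IsLeaf adj v} with hS
  set NL := {v : V // ¬ IsLeaf adj v} with hNL
  have hpar : ∀ v : S, ∃ u, adj u v.1 := fun v => exists_parent (hindeg v.1 v.2)
  let g : S → NL := fun v => ⟨(hpar v).choose, by
    intro hleaf
    exact outdeg_ne_zero (hpar v).choose_spec hleaf.2⟩
  have hg_adj : ∀ v : S, adj (g v).1 v.1 := fun v => (hpar v).choose_spec
  have hg_surj : Function.Surjective g := by
    rintro ⟨w, hw⟩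
    obtain ⟨u, hadj, hur⟩ := h.2 w hw
    have hu : IsTreeNode adj u ∨ IsLeaf adj u := child_cases h.1 hadj hur
    refine ⟨⟨u, hu⟩, ?_⟩
    apply Subtype.ext
    exact parent_eq (hindeg u hu) (hg_adj ⟨u, hu⟩) hadj
  have key : Nat.card {v : V // IsReticulation adj v} = n - 1 ↔ Nat.card S = Nat.card NL := by
    rw [hS, hNL, card_treeleaf, card_nonleaf h.1, hn]
    omega
  rw [key]
  constructor
  · -- card eq → injective (g) → unique child
    intro hcard
    have hbij : Function.Bijective g :=
      (Nat.bijective_iff_surjective_and_card g).mpr ⟨hg_surj, hcard⟩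
    intro v hv u₁ u₂ h1 hr1 h2 hr2
    have hu1 : IsTreeNode adj u₁ ∨ IsLeaf adj u₁ := child_cases h.1 h1 hr1
    have hu2 : IsTreeNode adj u₂ ∨ IsLeaf adj u₂ := child_cases h.1 h2 hr2
    have e1 : (g ⟨u₁, hu1⟩).1 = v := parent_eq (hindeg u₁ hu1) (hg_adj ⟨u₁, hu1⟩) h1
    have e2 : (g ⟨u₂, hu2⟩).1 = v := parent_eq (hindeg u₂ hu2) (hg_adj ⟨u₂, hu2⟩) h2
    have : g ⟨u₁, hu1⟩ = g ⟨u₂, hu2⟩ := Subtype.ext (e1.trans e2.symm)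
    have := hbij.1 this
    injection this
  · -- unique child → injective → card eq
    intro huc
    have hg_inj : Function.Injective g := by
      rintro v₁ v₂ hgv
      have hadj2 : adj (g v₁).1 v₂.1 := by rw [hgv]; exact hg_adj v₂
      exact Subtype.ext (huc (g v₁).1 (g v₁).2 v₁.1 v₂.1 (hg_adj v₁)
        (not_retic_of_tree_or_leaf v₁.2) hadj2 (not_retic_of_tree_or_leaf v₂.2))
    exact le_antisymm (Nat.card_le_card_of_injective g hg_inj)
      (Nat.card_le_card_of_surjective g hg_surj)

end Aux

theorem treeChild_max_retic_iff_unique_tree_path {V : Type} [Finite V]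
    (adj : V → V → Prop) (root : V) (h : IsTreeChildNetwork adj root) (n : ℕ)
    (hn : Nat.card {v : V // IsLeaf adj v} = n) :
    Nat.card {v : V // IsReticulation adj v} = n - 1 ↔
      ∀ v : V, ∃! l : List V, IsTreePathToLeaf adj v l := by
  rw [card_iff_uniqueChild h n hn, uniqueChild_iff_uniquePath h]
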